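/- Let H be a d-uniform properly-connected hypergraph. If an edge E of H is a v-leaf (contains a free vertex), then E is an f-leaf. -/

import Mathlib

open Finset
open scoped Classical

noncomputable section

/-- A simple hypergraph: all edges have at least two vertices and no edge contains another. -/
structure SimpleHypergraph (V : Type*) where
  edges : Finset (Finset V)
  card_ge : ∀ e ∈ edges, 2 ≤ e.card
  antichain : ∀ e ∈ edges, ∀ f ∈ edges, e ⊆ f → e = f

variable {V : Type*} [DecidableEq V]

/-- A chain `(E₀, x₁, E₁, …, xₙ, Eₙ)` in a hypergraph, recorded as the list of its edges;
the vertex conditions amount to `xₖ ∈ Eₖ₋₁ ∩ Eₖ`. -/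
def IsHChain (H : SimpleHypergraph V) (l : List (Finset V)) : Prop :=
  l ≠ [] ∧ l.Nodup ∧ (∀ e ∈ l, e ∈ H.edges) ∧
  ∃ xs : List V, xs.Nodup ∧ xs.length + 1 = l.length ∧
    ∀ i, (h : i < xs.length) → xs.get ⟨i, h⟩ ∈ l.getD i ∅ ∩ l.getD (i+1) ∅

/-- A proper chain: `|Eᵢ ∩ Eᵢ₊₁| = |Eᵢ₊₁| - 1` for all `i`. -/
def IsProperChain (H : SimpleHypergraph V) (l : List (Finset V)) : Prop :=
  IsHChain H l ∧ ∀ i, i + 1 < l.length →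
    (l.getD i ∅ ∩ l.getD (i+1) ∅).card + 1 = (l.getD (i+1) ∅).card

/-- A proper irredundant chain: no proper subsequence with the same endpoints is a proper
chain. -/
def IsPIChain (H : SimpleHypergraph V) (l : List (Finset V)) : Prop :=
  IsProperChain H l ∧ ∀ l' : List (Finset V), l'.Sublist l → l' ≠ l →
    l'.head? = l.head? → l'.getLast? = l.getLast? → ¬ IsProperChain H l'

/-- The distance between two edges: minimal length of a proper irredundant chain
from `E` to `F` (`∞` if there is none). -/
def edgeDist (H : SimpleHypergraph V) (E F : Finset V) : ℕ∞ :=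
  sInf ((fun l : List (Finset V) => ((l.length - 1 : ℕ) : ℕ∞)) ''
    {l | IsPIChain H l ∧ l.head? = some E ∧ l.getLast? = some F})

/-- A `d`-uniform properly-connected hypergraph. -/
def UniformPC (H : SimpleHypergraph V) (d : ℕ) : Prop :=
  (∀ e ∈ H.edges, e.card = d) ∧
  ∀ E ∈ H.edges, ∀ F ∈ H.edges, (E ∩ F).Nonempty →
    edgeDist H E F = ((d - (E ∩ F).card : ℕ) : ℕ∞)

/-- The sub-hypergraph consisting of the edges satisfying `P`. -/
def SimpleHypergraph.restrict (H : SimpleHypergraph V) (P : Finset V → Prop) :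
    SimpleHypergraph V where
  edges := H.edges.filter P
  card_ge := fun e he => H.card_ge e (Finset.mem_filter.mp he).1
  antichain := fun e he f hf hef =>
    H.antichain e (Finset.mem_filter.mp he).1 f (Finset.mem_filter.mp hf).1 hef

/-- The vertex neighbor set `N(E)` of an edge: union of `F \ E` over edges at distance 1. -/
def nbrSet (H : SimpleHypergraph V) (E : Finset V) : Finset V :=
  (H.edges.filter fun F => edgeDist H E F = 1).sup fun F => F \ E

variable (k : Type*) [Field k]

/-- The squarefree monomial attached to an edge. -/
def edgeMonomial (E : Finset V) : MvPolynomial V k := ∏ x ∈ E, MvPolynomial.X x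

/-- The edge ideal of a hypergraph. -/
def edgeIdeal (H : SimpleHypergraph V) : Ideal (MvPolynomial V k) :=
  Ideal.span ((fun E => edgeMonomial k E) '' ↑H.edges)

/-- The exponent vector of the squarefree monomial attached to an edge. -/
def mexp (E : Finset V) : V →₀ ℕ := ∑ x ∈ E, Finsupp.single x 1

/-- The minimal monomials (w.r.t. divisibility) among a finite set of monomials;
these are the minimal generators of the monomial ideal they generate. -/
def minMon (A : Finset (V →₀ ℕ)) : Finset (V →₀ ℕ) :=
  A.filter fun m => ∀ m' ∈ A, m' ≤ m → m' = m

/-- Minimal generators of `J ∩ K`, where `J`, `K` are the monomial ideals with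
(minimal) monomial generators `A`, `B`: minimal elements among the pairwise lcm's. -/
def interMin (A B : Finset (V →₀ ℕ)) : Finset (V →₀ ℕ) :=
  minMon ((A ×ˢ B).image fun p => p.1 ⊔ p.2)

/-- Eliahou–Kervaire splitting: the monomial ideal generated by `A ∪ B` is split as
the sum of the ideals generated by `A` and by `B`. -/
def IsSplitting (A B : Finset (V →₀ ℕ)) : Prop :=
  A.Nonempty ∧ B.Nonempty ∧ Disjoint A B ∧
  (∀ m ∈ A ∪ B, ∀ m' ∈ A ∪ B, m' ≤ m → m' = m) ∧
  ∃ φ ψ : (V →₀ ℕ) → (V →₀ ℕ),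
    (∀ w ∈ interMin A B, φ w ∈ A ∧ ψ w ∈ B ∧ w = φ w ⊔ ψ w) ∧
    ∀ S ⊆ interMin A B, S.Nonempty → S.sup φ < S.sup id ∧ S.sup ψ < S.sup id

/-- A splitting edge of a hypergraph: `I(H) = (x^E) + I(H \ E)` is a splitting. -/
def IsSplittingEdge (H : SimpleHypergraph V) (E : Finset V) : Prop :=
  E ∈ H.edges ∧ IsSplitting {mexp E} ((H.edges.erase E).image mexp)

variable [LinearOrder V]

/-- Total degree of a monomial. -/
def mdeg (m : V →₀ ℕ) : ℕ := m.sum fun _ e => e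

/-- Basis of the degree-`j` part of the `i`-th term of the Taylor complex of the monomial
ideal generated by `G`: `i`-element subsets of `G` whose lcm has degree `j`. -/
def TaylorIndex (G : Finset (V →₀ ℕ)) (i j : ℕ) : Finset (Finset (V →₀ ℕ)) :=
  G.powerset.filter fun S => S.card = i ∧ mdeg (S.sup id) = j

/-- Matrix of the Taylor-complex differential `T_{i+1} → T_i` reduced mod the maximal
ideal, in homological degree-`j` graded part. -/
def taylorMatrix (G : Finset (V →₀ ℕ)) (i j : ℕ) :
    Matrix (TaylorIndex G i j) (TaylorIndex G (i+1) j) k :=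
  fun S' S =>
    if (S' : Finset (V →₀ ℕ)) ⊆ (S : Finset (V →₀ ℕ)) ∧
        (S' : Finset (V →₀ ℕ)).sup id = (S : Finset (V →₀ ℕ)).sup id then
      ∑ m ∈ (S : Finset (V →₀ ℕ)) \ (S' : Finset (V →₀ ℕ)),
        (-1 : k) ^ ((S' : Finset (V →₀ ℕ)).filter fun a => toLex a < toLex m).card
    else 0

/-- The Taylor-complex differential reduced mod the maximal ideal. -/
def taylorBoundary (G : Finset (V →₀ ℕ)) (i j : ℕ) :
    ((TaylorIndex G (i+1) j) → k) →ₗ[k] ((TaylorIndex G i j) → k) :=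
  Matrix.mulVecLin (taylorMatrix k G i j)

/-- The graded Betti number `β_{i,j}` of the monomial ideal generated by `G`, computed as
the dimension of the degree-`j` part of the `i`-th homology of the Taylor complex tensored
with the residue field. -/
def monomialBetti (G : Finset (V →₀ ℕ)) (i j : ℕ) : ℕ :=
  Module.finrank k (LinearMap.ker (taylorBoundary k G i j)) -
  Module.finrank k (LinearMap.range (taylorBoundary k G (i+1) j))

/-- Castelnuovo–Mumford regularity of the monomial ideal generated by `G`. -/
def monReg (G : Finset (V →₀ ℕ)) : ℕ :=
  sSup {r | ∃ i j, monomialBetti k G i j ≠ 0 ∧ r + i = j}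

/-- Projective dimension of the monomial ideal generated by `G`. -/
def monPdim (G : Finset (V →₀ ℕ)) : ℕ :=
  sSup {i | ∃ j, monomialBetti k G i j ≠ 0}

/-- Graded Betti numbers of the edge ideal of a hypergraph. -/
def edgeBetti (H : SimpleHypergraph V) (i j : ℕ) : ℕ :=
  monomialBetti k (H.edges.image mexp) i j

/-- Regularity of the edge ideal of a hypergraph. -/
def edgeReg (H : SimpleHypergraph V) : ℕ :=
  monReg k (H.edges.image mexp)

theorem fleaf_of_vleaf_uniformPC {V : Type*} [DecidableEq V]
    (H : SimpleHypergraph V) (d : ℕ) (hpc : UniformPC H d)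
    (E : Finset V) (hE : E ∈ H.edges)
    (hvleaf : ∃ v ∈ E, ∀ F ∈ H.edges, F ≠ E → v ∉ F) :
    H.edges = {E} ∨ ∃ G ∈ H.edges, G ≠ E ∧
      ∀ E' ∈ H.edges, E' ≠ E → E ∩ E' ⊆ E ∩ G := by
  obtain ⟨v, hvE, hv⟩ := hvleaf
  by_cases hsingle : H.edges = {E}
  · exact Or.inl hsingle
  right
  obtain ⟨G0, hG0, hG0ne⟩ : ∃ G0 ∈ H.edges, G0 ≠ E := by
    by_contra h
    push_neg at h
    exact hsingle (Finset.Subset.antisymm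
      (fun F hF => by simp [h F hF]) (by simpa using hE))
  by_cases hint : ∃ E' ∈ H.edges, E' ≠ E ∧ (E ∩ E').Nonempty
  · obtain ⟨E', hE', hne, hEE'⟩ := hint
    have hdist := hpc.2 E hE E' hE' hEE'
    have hS : ∃ l, IsPIChain H l ∧ l.head? = some E ∧ l.getLast? = some E' := by
      by_contra h
      push_neg at h
      have hempty : {l | IsPIChain H l ∧ l.head? = some E ∧ l.getLast? = some E'}
          = (∅ : Set (List (Finset V))) := by
        ext l
        simp only [Set.mem_setOf_eq, Set.mem_empty_iff_false, iff_false, not_and]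
        intro h1 h2 h3
        exact h l h1 h2 h3
      rw [edgeDist, hempty, Set.image_empty, sInf_empty] at hdist
      exact absurd hdist.symm (ENat.coe_ne_top _)
    obtain ⟨l, hpi, hhead, hlast⟩ := hS
    obtain ⟨⟨⟨hne0, hnodup, hmem, -⟩, hproper⟩, -⟩ := hpi
    obtain ⟨t, rfl⟩ : ∃ t, l = E :: t := by
      cases l with
      | nil => simp at hhead
      | cons a t =>
        simp only [List.head?_cons, Option.some.injEq] at hhead
        exact ⟨t, by rw [hhead]⟩
    cases t with
    | nil =>
      simp only [List.getLast?_singleton, Option.some.injEq] at hlast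
      exact absurd hlast.symm hne
    | cons E1 rest =>
      have hE1mem : E1 ∈ H.edges := hmem E1 (by simp)
      have hE1ne : E1 ≠ E := by
        have := hnodup
        simp only [List.nodup_cons, List.mem_cons] at this
        intro hc; exact this.1 (Or.inl hc.symm)
      have hstep := hproper 0 (by simp)
      simp only [List.getD_cons_zero, List.getD_cons_succ] at hstep
      have hdE : E.card = d := hpc.1 E hE
      have hdE1 : E1.card = d := hpc.1 E1 hE1mem
      have hvE1 : v ∉ E1 := hv E1 hE1mem hE1ne
      have hsub : E ∩ E1 ⊆ E.erase v := by
        intro x hx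
        rw [Finset.mem_inter] at hx
        exact Finset.mem_erase.mpr ⟨fun hxv => hvE1 (hxv ▸ hx.2), hx.1⟩
      have hcard : (E.erase v).card ≤ (E ∩ E1).card := by
        rw [Finset.card_erase_of_mem hvE, hdE]
        omega
      have hkey : E ∩ E1 = E.erase v := Finset.eq_of_subset_of_card_le hsub hcard
      refine ⟨E1, hE1mem, hE1ne, fun F hF hFne x hx => ?_⟩
      rw [Finset.mem_inter] at hx
      have hxv : x ≠ v := fun hc => hv F hF hFne (hc ▸ hx.2)
      have : x ∈ E ∩ E1 := hkey ▸ Finset.mem_erase.mpr ⟨hxv, hx.1⟩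
      rw [Finset.mem_inter] at this ⊢
      exact ⟨hx.1, this.2⟩
  · push_neg at hint
    refine ⟨G0, hG0, hG0ne, fun F hF hFne => ?_⟩
    have : E ∩ F = ∅ := hint F hF hFne
    simp [this]
end
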